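/- Let X be a metric space and assume ℓ-dim(X × [0,1]) ≤ k, where X × [0,1] carries the l∞ metric. Then there exist τ₀ > 0 and σ > 1 so that for every 0 < τ < τ₀ and every τ′ > 0 there exists a (k+1)-colored open covering 𝒰 of X × ℝ with mesh^×(𝒰) ≤ (στ, στ′) and L^×(𝒰) ≥ (τ, τ′). -/

import Mathlib

open Metric Set Filter ENNReal NNReal

noncomputable section

namespace PaperDefs

/-! ### Coverings: mesh, Lebesgue number, colorings, multiplicity -/

/-- The mesh of a family of subsets of a metric space. -/
def meshF {Z : Type*} [PseudoMetricSpace Z] (U : Set (Set Z)) : ℝ≥0∞ :=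
  ⨆ V ∈ U, EMetric.diam V

/-- The Lebesgue number of a family `U` as a covering of `A`:
`inf_{z ∈ A} sup_{V ∈ U} dist (z, Z \ V)`. -/
def lebesgueF {Z : Type*} [PseudoMetricSpace Z] (U : Set (Set Z)) (A : Set Z) : ℝ≥0∞ :=
  ⨅ z ∈ A, ⨆ V ∈ U, EMetric.infEdist z Vᶜ

def IsOpenFamily {Z : Type*} [TopologicalSpace Z] (U : Set (Set Z)) : Prop :=
  ∀ V ∈ U, IsOpen V

def IsCoveringOf {Z : Type*} (U : Set (Set Z)) (A : Set Z) : Prop :=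
  A ⊆ ⋃₀ U

/-- A family is `m`-colored if it is a union of `m` families, each consisting of
pairwise disjoint sets. -/
def IsColored {Z : Type*} (U : Set (Set Z)) (m : ℕ) : Prop :=
  ∃ F : Fin m → Set (Set Z), U = ⋃ i, F i ∧ ∀ i, (F i).Pairwise Disjoint

/-- The multiplicity of a family is at most `m`: any collection of its members with a
common point has cardinality at most `m`. -/
def MultiplicityLE {Z : Type*} (U : Set (Set Z)) (m : ℕ) : Prop :=
  ∀ s : Finset (Set Z), ↑s ⊆ U → (⋂₀ (s : Set (Set Z))).Nonempty → s.card ≤ m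

/-- An `(L, M, n)`-covering of `A`: an open `n`-colored covering with mesh at most `M`
and Lebesgue number at least `L`. -/
def IsLMNCover {Z : Type*} [PseudoMetricSpace Z] (U : Set (Set Z)) (A : Set Z)
    (L M : ℝ) (n : ℕ) : Prop :=
  IsOpenFamily U ∧ IsCoveringOf U A ∧ IsColored U n ∧
    meshF U ≤ ENNReal.ofReal M ∧ ENNReal.ofReal L ≤ lebesgueF U A

/-! ### Dimensions -/

/-- `ℓ-dim Z ≤ k`. -/
def ElldimLE (Z : Type*) [PseudoMetricSpace Z] (k : ℕ) : Prop :=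
  ∃ δ : ℝ, δ ∈ Set.Ioo (0:ℝ) 1 ∧ ∃ τ₀ : ℝ, 0 < τ₀ ∧ ∀ τ : ℝ, 0 < τ → τ < τ₀ →
    ∃ U : Set (Set Z), IsLMNCover U Set.univ (δ * τ) τ (k + 1)

/-- The linearly controlled dimension of a metric space. -/
def elldim (Z : Type*) [PseudoMetricSpace Z] : ℕ∞ :=
  sInf {n : ℕ∞ | ∃ k : ℕ, n = k ∧ ElldimLE Z k}

/-- `asdim X ≤ m`. -/
def AsdimLE (X : Type*) [PseudoMetricSpace X] (m : ℕ) : Prop :=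
  ∀ d : ℝ, 0 < d → ∃ U : Set (Set X), IsOpenFamily U ∧ IsCoveringOf U Set.univ ∧
    MultiplicityLE U (m + 1) ∧ meshF U < ⊤ ∧ ENNReal.ofReal d ≤ lebesgueF U Set.univ

/-- The asymptotic dimension of a metric space. -/
def asdim (X : Type*) [PseudoMetricSpace X] : ℕ∞ :=
  sInf {n : ℕ∞ | ∃ m : ℕ, n = m ∧ AsdimLE X m}

/-- `ℓ-asdim X ≤ n`. -/
def LasdimLE (X : Type*) [PseudoMetricSpace X] (n : ℕ) : Prop :=
  ∃ C : ℝ, 1 < C ∧ ∃ d₀ : ℝ, ∀ d : ℝ, d₀ ≤ d →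
    ∃ U : Set (Set X), IsLMNCover U Set.univ d (C * d) (n + 1)

/-- The linearly controlled asymptotic dimension of a metric space. -/
def lasdim (X : Type*) [PseudoMetricSpace X] : ℕ∞ :=
  sInf {n : ℕ∞ | ∃ m : ℕ, n = m ∧ LasdimLE X m}

/-- Topological covering dimension `≤ m`: every open covering admits an open refinement of
multiplicity at most `m + 1`. -/
def CovDimLE (Z : Type*) [TopologicalSpace Z] (m : ℕ) : Prop :=
  ∀ U : Set (Set Z), IsOpenFamily U → IsCoveringOf U Set.univ →
    ∃ V : Set (Set Z), IsOpenFamily V ∧ IsCoveringOf V Set.univ ∧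
      (∀ W ∈ V, ∃ W' ∈ U, W ⊆ W') ∧ MultiplicityLE V (m + 1)

/-- Topological covering dimension. -/
def covDim (Z : Type*) [TopologicalSpace Z] : ℕ∞ :=
  sInf {n : ℕ∞ | ∃ m : ℕ, n = m ∧ CovDimLE Z m}

/-! ### Scaled metric spaces and uniform `ℓ-dim` for families -/

/-- `Scaled a X` is the metric space obtained from `X` by multiplying all distances by `a`. -/
def Scaled (a : ℝ≥0) (X : Type*) : Type _ := X

def Scaled.unmk {a : ℝ≥0} {X : Type*} (x : Scaled a X) : X := x

def Scaled.dist' (a : ℝ≥0) {X : Type*} [PseudoMetricSpace X] (x y : Scaled a X) : ℝ :=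
  a * dist x.unmk y.unmk

noncomputable instance Scaled.pseudoMetricSpace (a : ℝ≥0) (X : Type*) [PseudoMetricSpace X] :
    PseudoMetricSpace (Scaled a X) where
  dist := Scaled.dist' a
  dist_self x := by simp [Scaled.dist']
  dist_comm x y := by simp [Scaled.dist', dist_comm]
  dist_triangle x y z := by
    have h := dist_triangle x.unmk y.unmk z.unmk
    have h2 := mul_le_mul_of_nonneg_left h a.coe_nonneg
    simp only [Scaled.dist']
    calc (a : ℝ) * dist x.unmk z.unmk ≤ a * (dist x.unmk y.unmk + dist y.unmk z.unmk) := h2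
      _ = a * dist x.unmk y.unmk + a * dist y.unmk z.unmk := by ring

/-- A family of metric spaces has `ℓ-dim ≤ k` uniformly. -/
def UnifElldimLE {ι : Type*} (Z : ι → Type*) [∀ i, PseudoMetricSpace (Z i)] (k : ℕ) : Prop :=
  ∃ δ : ℝ, δ ∈ Set.Ioo (0:ℝ) 1 ∧ ∃ τ₀ : ℝ, 0 < τ₀ ∧ ∀ τ : ℝ, 0 < τ → τ < τ₀ → ∀ i : ι,
    ∃ U : Set (Set (Z i)), IsLMNCover U Set.univ (δ * τ) τ (k + 1)

/-! ### `mesh^×` and `L^×` for products -/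

/-- `mesh^× U ≤ (p, q)`. -/
def MeshProdLE {X Y : Type*} [PseudoMetricSpace X] [PseudoMetricSpace Y]
    (U : Set (Set (X × Y))) (p q : ℝ) : Prop :=
  ∀ V ∈ U, ∃ x : X, ∃ y : Y, V ⊆ closedBall x p ×ˢ closedBall y q

/-- `L^× U ≥ (p, q)`. -/
def LProdGE {X Y : Type*} [PseudoMetricSpace X] [PseudoMetricSpace Y]
    (U : Set (Set (X × Y))) (p q : ℝ) : Prop :=
  ∀ z : X × Y, ∃ V ∈ U, closedBall z.1 p ×ˢ closedBall z.2 q ⊆ V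

/-- pointed `mesh^× (U, z) ≤ (p, q)`. -/
def MeshProdAtLE {X Y : Type*} [PseudoMetricSpace X] [PseudoMetricSpace Y]
    (U : Set (Set (X × Y))) (z : X × Y) (p q : ℝ) : Prop :=
  ∀ V ∈ U, z ∈ V → ∃ x : X, ∃ y : Y, V ⊆ closedBall x p ×ˢ closedBall y q

/-- pointed `L^× (U, z) ≥ (p, q)`. -/
def LProdAtGE {X Y : Type*} [PseudoMetricSpace X] [PseudoMetricSpace Y]
    (U : Set (Set (X × Y))) (z : X × Y) (p q : ℝ) : Prop :=
  ∃ V ∈ U, closedBall z.1 p ×ˢ closedBall z.2 q ⊆ V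

/-! ### Hyperbolic spaces and their boundaries -/

/-- The Gromov product `(x|y)_o`. -/
def gromov {Z : Type*} [PseudoMetricSpace Z] (o x y : Z) : ℝ :=
  (dist x o + dist y o - dist x y) / 2

/-- `X` is `δ`-hyperbolic. -/
def IsDeltaHyperbolic (X : Type*) [PseudoMetricSpace X] (δ : ℝ) : Prop :=
  0 ≤ δ ∧ ∀ o x y z : X, min (gromov o x z) (gromov o z y) - δ ≤ gromov o x y

/-- `X` is Gromov hyperbolic. -/
def GromovHyperbolic (X : Type*) [PseudoMetricSpace X] : Prop :=
  ∃ δ : ℝ, IsDeltaHyperbolic X δ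

/-- A sequence converges at infinity if `liminf_{i,j → ∞} (x_i | x_j)_o = ∞`. -/
def ConvAtInf {X : Type*} [PseudoMetricSpace X] (o : X) (x : ℕ → X) : Prop :=
  Tendsto (fun p : ℕ × ℕ => gromov o (x p.1) (x p.2)) (atTop ×ˢ atTop) atTop

/-- Sequences converging at infinity. -/
def BdrySeq (X : Type*) [PseudoMetricSpace X] (o : X) := {x : ℕ → X // ConvAtInf o x}

/-- Equivalence of sequences converging at infinity. -/
def bdryRel (X : Type*) [PseudoMetricSpace X] (o : X) (x y : BdrySeq X o) : Prop :=
  Tendsto (fun p : ℕ × ℕ => gromov o (x.1 p.1) (y.1 p.2)) (atTop ×ˢ atTop) atTop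

/-- The boundary at infinity of `X` (with respect to the base point `o`). -/
def Boundary (X : Type*) [PseudoMetricSpace X] (o : X) := Quot (bdryRel X o)

/-- The Gromov product of two boundary points. -/
def bGromov {X : Type*} [PseudoMetricSpace X] (o : X) (ξ η : Boundary X o) : ℝ :=
  sInf {t : ℝ | ∃ x y : BdrySeq X o, Quot.mk (bdryRel X o) x = ξ ∧ Quot.mk (bdryRel X o) y = η ∧
    t = liminf (fun p : ℕ × ℕ => gromov o (x.1 p.1) (y.1 p.2)) (atTop ×ˢ atTop)}

/-- The Gromov product of a point of the space and a boundary point. -/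
def mGromov {X : Type*} [PseudoMetricSpace X] (o : X) (x : X) (ξ : Boundary X o) : ℝ :=
  sInf {t : ℝ | ∃ y : BdrySeq X o, Quot.mk (bdryRel X o) y = ξ ∧
    t = liminf (fun j : ℕ => gromov o x (y.1 j)) atTop}

/-- A hyperbolic space is visual. -/
def IsVisualSpace (X : Type*) [PseudoMetricSpace X] : Prop :=
  ∃ x₀ : X, ∃ D : ℝ, 0 < D ∧ ∀ x : X, ∃ ξ : Boundary X x₀,
    dist x x₀ ≤ mGromov x₀ x ξ + D

/-- `B` is a copy of the boundary at infinity of `X` (realized by the bijection `φ`)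
equipped with a visual metric. -/
def IsVisualBoundary (X : Type*) [PseudoMetricSpace X] (o : X)
    (B : Type*) [PseudoMetricSpace B] (φ : B ≃ Boundary X o) : Prop :=
  ∃ a : ℝ, 1 < a ∧ ∃ c₁ c₂ : ℝ, 0 < c₁ ∧ 0 < c₂ ∧ ∀ ξ ξ' : B,
    c₁ * a ^ (-(bGromov o (φ ξ) (φ ξ'))) ≤ dist ξ ξ' ∧
    dist ξ ξ' ≤ c₂ * a ^ (-(bGromov o (φ ξ) (φ ξ')))

/-- A geodesic from `x` to `y`: an isometric parametrization of `[0, dist x y]`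
sending `0` to `x` and `dist x y` to `y`. -/
def IsGeodesicFrom {Z : Type*} [PseudoMetricSpace Z] (f : ℝ → Z) (x y : Z) : Prop :=
  f 0 = x ∧ f (dist x y) = y ∧ ∀ s ∈ Set.Icc (0:ℝ) (dist x y), ∀ t ∈ Set.Icc (0:ℝ) (dist x y),
    dist (f s) (f t) = |s - t|

/-- A geodesic metric space. -/
def IsGeodesicSpace (X : Type*) [PseudoMetricSpace X] : Prop :=
  ∀ x y : X, ∃ f : ℝ → X, IsGeodesicFrom f x y

/-! ### Word metrics and hyperbolic groups -/

/-- The word length of `g` with respect to the (symmetrized) generating set `S`. -/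
def wordLength {G : Type*} [Group G] (S : Set G) (g : G) : ℕ :=
  sInf {n : ℕ | ∃ w : List G, w.length = n ∧ (∀ s ∈ w, s ∈ S ∨ s⁻¹ ∈ S) ∧ w.prod = g}

/-- The metric on `G` is the word metric of the finite generating set `S`. -/
def IsWordMetric {G : Type*} [Group G] [PseudoMetricSpace G] (S : Set G) : Prop :=
  S.Finite ∧ Subgroup.closure S = ⊤ ∧ ∀ g h : G, dist g h = wordLength S (g⁻¹ * h)

/-! ### Hyperbolic cones -/

/-- The inverse hyperbolic cosine. -/
def arcosh (x : ℝ) : ℝ := Real.log (x + Real.sqrt (x ^ 2 - 1))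

/-- The hyperbolic cone distance between points of `Z × [0, ∞)`, where `Z` is a bounded
metric space of positive diameter:
`cosh d = cosh t · cosh t' − sinh t · sinh t' · cos (μ |z z'|)` with `μ = π / diam Z`. -/
def coneDist {Z : Type*} [PseudoMetricSpace Z] (p q : Z × ℝ≥0) : ℝ :=
  arcosh (Real.cosh p.2 * Real.cosh q.2 -
    Real.sinh p.2 * Real.sinh q.2 *
      Real.cos (Real.pi / Metric.diam (Set.univ : Set Z) * dist p.1 q.1))

/-- `C` is (a realization of) the hyperbolic cone over `Z`: `h` is the canonical projection
of `Z × [0, ∞)` onto `C = Z × [0,∞) / Z × {0}`, and the metric of `C` is the hyperbolic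
cone metric. -/
def IsHypCone (Z : Type*) [PseudoMetricSpace Z] (C : Type*) [PseudoMetricSpace C]
    (h : Z × ℝ≥0 → C) : Prop :=
  Function.Surjective h ∧ ∀ p q : Z × ℝ≥0, dist (h p) (h q) = coneDist p q

/-- A metric space is locally self-similar. -/
def LocallySelfSimilar (Z : Type*) [PseudoMetricSpace Z] : Prop :=
  ∃ lam : ℝ, 1 ≤ lam ∧ ∃ R₀ : ℝ, 1 < R₀ ∧ ∀ R : ℝ, R₀ ≤ R → ∀ A : Set Z,
    Metric.diam A ≤ 1 / R → ∃ f : A → Z, ∀ x y : A,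
      R * dist (x : Z) (y : Z) / lam ≤ dist (f x) (f y) ∧
      dist (f x) (f y) ≤ lam * R * dist (x : Z) (y : Z)

end PaperDefs

open PaperDefs

section RcovAux

def zigD (L : ℝ) : Set ℝ := Set.range (fun n : ℤ => 2*L*n)

lemma zigD_nonempty (L : ℝ) : (zigD L).Nonempty := ⟨2*L*((0:ℤ):ℝ), ⟨0, rfl⟩⟩

lemma le_infDist' {s : Set ℝ} (hs : s.Nonempty) {x b : ℝ} (H : ∀ y ∈ s, b ≤ dist x y) :
    b ≤ infDist x s := by
  by_contra hlt
  obtain ⟨y, hy, hd⟩ := (infDist_lt_iff hs).1 (lt_of_not_ge hlt)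
  exact absurd (H y hy) (not_le.2 hd)

lemma zig_left {L : ℝ} (hL : 0 < L) (j : ℤ) {u : ℝ} (h1 : 2*L*j ≤ u) (h2 : u ≤ 2*L*j + L) :
    infDist u (zigD L) = u - 2*L*j := by
  apply le_antisymm
  · have h := infDist_le_dist_of_mem (x := u) (s := zigD L) (y := 2*L*(j:ℝ)) ⟨j, rfl⟩
    rwa [Real.dist_eq, abs_of_nonneg (by linarith)] at h
  · apply le_infDist' (zigD_nonempty L)
    rintro y ⟨n, rfl⟩
    dsimp only
    rw [Real.dist_eq]
    rcases le_or_gt n j with hn | hn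
    · have hn' : (n:ℝ) ≤ (j:ℝ) := by exact_mod_cast hn
      have : 2*L*(n:ℝ) ≤ 2*L*(j:ℝ) := by nlinarith
      rw [abs_of_nonneg (by linarith)]; linarith
    · have hn' : (j:ℝ) + 1 ≤ (n:ℝ) := by exact_mod_cast hn
      have : 2*L*(j:ℝ) + 2*L ≤ 2*L*(n:ℝ) := by nlinarith
      rw [abs_sub_comm, abs_of_nonneg (by linarith)]; linarith

lemma zig_right {L : ℝ} (hL : 0 < L) (j : ℤ) {u : ℝ} (h1 : 2*L*j + L ≤ u)
    (h2 : u ≤ 2*L*j + 2*L) :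
    infDist u (zigD L) = 2*L*j + 2*L - u := by
  apply le_antisymm
  · have h := infDist_le_dist_of_mem (x := u) (s := zigD L) (y := 2*L*((j+1:ℤ):ℝ)) ⟨j+1, rfl⟩
    have e : 2*L*((j+1:ℤ):ℝ) = 2*L*(j:ℝ) + 2*L := by push_cast; ring
    rwa [Real.dist_eq, e, abs_sub_comm, abs_of_nonneg (by linarith)] at h
  · apply le_infDist' (zigD_nonempty L)
    rintro y ⟨n, rfl⟩
    dsimp only
    rw [Real.dist_eq]
    rcases le_or_gt n j with hn | hn
    · have hn' : (n:ℝ) ≤ (j:ℝ) := by exact_mod_cast hn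
      have : 2*L*(n:ℝ) ≤ 2*L*(j:ℝ) := by nlinarith
      rw [abs_of_nonneg (by linarith)]; linarith
    · have hn' : (j:ℝ) + 1 ≤ (n:ℝ) := by exact_mod_cast hn
      have : 2*L*(j:ℝ) + 2*L ≤ 2*L*(n:ℝ) := by nlinarith
      rcases le_or_gt u (2*L*(n:ℝ)) with hc | hc
      · rw [abs_sub_comm, abs_of_nonneg (by linarith)]; linarith
      · rw [abs_of_nonneg (by linarith)]; linarith

lemma zig_le {L : ℝ} (hL : 0 < L) (u : ℝ) : infDist u (zigD L) ≤ L := by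
  set j : ℤ := ⌊u / (2*L)⌋ with hj
  have h2L : (0:ℝ) < 2*L := by linarith
  have hf1 : 2*L*(j:ℝ) ≤ u := by
    have := Int.floor_le (u / (2*L))
    calc 2*L*(j:ℝ) ≤ 2*L*(u/(2*L)) := by nlinarith
      _ = u := by field_simp
  have hf2 : u ≤ 2*L*(j:ℝ) + 2*L := by
    have := (Int.lt_floor_add_one (u / (2*L))).le
    calc u = 2*L*(u/(2*L)) := by field_simp
      _ ≤ 2*L*((j:ℝ)+1) := by nlinarith
      _ = 2*L*(j:ℝ) + 2*L := by ring
  rcases le_or_gt u (2*L*(j:ℝ) + L) with hc | hc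
  · rw [zig_left hL j hf1 hc]; linarith
  · rw [zig_right hL j hc.le hf2]; linarith

lemma zig_piece {L : ℝ} (hL : 0 < L) (m : ℤ) {u v : ℝ}
    (hu1 : L*m ≤ u) (hu2 : u ≤ L*m + L) (hv1 : L*m ≤ v) (hv2 : v ≤ L*m + L) :
    |infDist u (zigD L) - infDist v (zigD L)| = |u - v| := by
  rcases Int.even_or_odd m with ⟨j, hj⟩ | ⟨j, hj⟩
  · subst hj
    have e : (L:ℝ)*((j+j:ℤ):ℝ) = 2*L*(j:ℝ) := by push_cast; ring
    rw [e] at hu1 hu2 hv1 hv2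
    rw [zig_left hL j hu1 hu2, zig_left hL j hv1 hv2]
    congr 1; ring
  · subst hj
    have e : (L:ℝ)*((2*j+1:ℤ):ℝ) = 2*L*(j:ℝ) + L := by push_cast; ring
    rw [e] at hu1 hu2 hv1 hv2
    rw [zig_right hL j hu1 (by linarith), zig_right hL j hv1 (by linarith), abs_sub_comm]
    congr 1; ring

lemma zig_osc {L : ℝ} (hL : 0 < L) {t₁ t₂ : ℝ} (h12 : t₁ ≤ t₂) :
    ∃ u₁ ∈ Set.Icc t₁ t₂, ∃ u₂ ∈ Set.Icc t₁ t₂,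
      min ((t₂ - t₁)/2) L ≤ |infDist u₁ (zigD L) - infDist u₂ (zigD L)| := by
  set n : ℤ := ⌈t₁ / L⌉ with hn
  set q : ℝ := L * (n:ℝ) with hq
  have hq1 : t₁ ≤ q := by
    have := Int.le_ceil (t₁ / L)
    calc t₁ = L * (t₁/L) := by field_simp
      _ ≤ L * (n:ℝ) := by nlinarith
  have hq2 : q < t₁ + L := by
    have := Int.ceil_lt_add_one (t₁ / L)
    calc q = L * (n:ℝ) := rfl
      _ < L * (t₁/L + 1) := by nlinarith
      _ = t₁ + L := by field_simp
  rcases le_or_gt (q + L) t₂ with hc | hc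
  · refine ⟨q, ⟨hq1, by linarith⟩, q + L, ⟨by linarith, hc⟩, ?_⟩
    have hp := zig_piece hL n (u := q) (v := q + L) le_rfl (by linarith) (by linarith) le_rfl
    rw [hp]
    have : |q - (q + L)| = L := by rw [abs_sub_comm]; rw [abs_of_nonneg (by linarith)]; ring
    rw [this]
    exact min_le_right _ _
  · have hbnd1 : L*((n-1:ℤ):ℝ) ≤ t₁ := by push_cast; nlinarith
    have hbnd2 : L*((n-1:ℤ):ℝ) + L = q := by push_cast; ring
    rcases le_or_gt q t₂ with hq3 | hq3
    · rcases le_or_gt ((t₂ - t₁)/2) (q - t₁) with hh | hh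
      · refine ⟨t₁, ⟨le_rfl, h12⟩, q, ⟨hq1, hq3⟩, ?_⟩
        have hp := zig_piece hL (n-1) (u := t₁) (v := q) hbnd1 (by linarith) (by linarith) (by linarith)
        rw [hp, abs_sub_comm, abs_of_nonneg (by linarith)]
        exact le_trans (min_le_left _ _) hh
      · refine ⟨q, ⟨hq1, hq3⟩, t₂, ⟨by linarith, le_rfl⟩, ?_⟩
        have hp := zig_piece hL n (u := q) (v := t₂) le_rfl (by linarith) hq3 (by linarith)
        rw [hp, abs_sub_comm, abs_of_nonneg (by linarith)]
        exact le_trans (min_le_left _ _) (by linarith)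
    · refine ⟨t₁, ⟨le_rfl, h12⟩, t₂, ⟨h12, le_rfl⟩, ?_⟩
      have hp := zig_piece hL (n-1) (u := t₁) (v := t₂) hbnd1 (by linarith) (by linarith) (by linarith)
      rw [hp, abs_sub_comm, abs_of_nonneg (by linarith)]
      exact le_trans (min_le_left _ _) (by linarith)

lemma isColored_mono {Z : Type*} {U : Set (Set Z)} {a b : ℕ} (hab : a ≤ b)
    (h : IsColored U a) : IsColored U b := by
  obtain ⟨F, hU, hd⟩ := h
  refine ⟨fun i => if h : (i : ℕ) < a then F ⟨i, h⟩ else ∅, ?_, ?_⟩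
  · rw [hU]; ext x
    simp only [Set.mem_iUnion]
    constructor
    · rintro ⟨i, hi⟩
      refine ⟨⟨i, lt_of_lt_of_le i.2 hab⟩, ?_⟩
      rw [dif_pos (show ((⟨(i:ℕ), lt_of_lt_of_le i.2 hab⟩ : Fin b) : ℕ) < a from i.2)]
      simpa using hi
    · rintro ⟨i, hi⟩
      by_cases hia : (i:ℕ) < a
      · rw [dif_pos hia] at hi; exact ⟨_, hi⟩
      · rw [dif_neg hia] at hi; exact absurd hi (Set.notMem_empty x)
  · intro i
    dsimp only
    by_cases hia : (i:ℕ) < a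
    · rw [dif_pos hia]; exact hd _
    · rw [dif_neg hia]; exact Set.pairwise_empty _

end RcovAux

set_option maxHeartbeats 2000000 in
/-- **Lemma (Rcov), part 1.** If `ℓ-dim (X × [0,1]) ≤ k` then there are `τ₀ > 0`, `σ > 1`
such that for all `0 < τ < τ₀` and `τ' > 0` there is a `(k+1)`-colored open covering `U` of
`X × ℝ` with `mesh^×(U) ≤ (σ τ, σ τ')` and `L^×(U) ≥ (τ, τ')`. -/
theorem rcov_one
    {X : Type*} [MetricSpace X] (k : ℕ)
    (h : elldim (X × Set.Icc (0:ℝ) 1) ≤ (k : ℕ∞)) :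
    ∃ τ₀ : ℝ, 0 < τ₀ ∧ ∃ σ : ℝ, 1 < σ ∧
      ∀ τ : ℝ, 0 < τ → τ < τ₀ → ∀ τ' : ℝ, 0 < τ' →
        ∃ U : Set (Set (X × ℝ)), IsOpenFamily U ∧ IsCoveringOf U Set.univ ∧
          IsColored U (k + 1) ∧ MeshProdLE U (σ * τ) (σ * τ') ∧ LProdGE U τ τ' := by
  classical
  -- Step 1: extract `m ≤ k` with `ElldimLE (X × [0,1]) m`
  have hS : {n : ℕ∞ | ∃ m : ℕ, n = (m:ℕ∞) ∧ ElldimLE (X × Set.Icc (0:ℝ) 1) m}.Nonempty := by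
    by_contra hne
    rw [Set.not_nonempty_iff_eq_empty] at hne
    unfold elldim at h
    rw [hne] at h
    simp at h
  obtain ⟨m, hmeq, hm⟩ := csInf_mem hS
  have hmk : m ≤ k := by
    unfold elldim at h
    rw [hmeq] at h
    exact_mod_cast h
  obtain ⟨δ, hδ, τ₁, hτ₁, H⟩ := hm
  have hδ0 : (0:ℝ) < δ := hδ.1
  have hδ1 : δ < 1 := hδ.2
  refine ⟨min (δ * τ₁ / 2) (δ / 4), by positivity, 2 / δ,
    by rw [lt_div_iff₀ hδ0]; linarith, ?_⟩
  intro τ hτ hττ₀ τ' hτ'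
  have hτa : τ < δ * τ₁ / 2 := lt_of_lt_of_le hττ₀ (min_le_left _ _)
  have hτb : τ < δ / 4 := lt_of_lt_of_le hττ₀ (min_le_right _ _)
  set s : ℝ := 2 * τ / δ with hs_def
  have hs0 : 0 < s := by positivity
  have hsτ₁ : s < τ₁ := by rw [hs_def, div_lt_iff₀ hδ0]; nlinarith
  have hs_half : s < 1/2 := by rw [hs_def, div_lt_iff₀ hδ0]; nlinarith
  have hστ : 2 / δ * τ = s := by rw [hs_def]; ring
  have hδs : δ * s = 2 * τ := by rw [hs_def]; field_simp
  obtain ⟨U₀, hopen₀, hcov₀, hcol₀, hmesh₀, hleb₀⟩ := H s hs0 hsτ₁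
  obtain ⟨F₀, hF₀U, hF₀dis⟩ := hcol₀
  have hF₀sub : ∀ i, F₀ i ⊆ U₀ := by
    intro i; rw [hF₀U]; exact Set.subset_iUnion F₀ i
  set L : ℝ := τ' / τ with hL_def
  have hL : 0 < L := div_pos hτ' hτ
  have hτL : τ' / L = τ := by rw [hL_def]; field_simp
  have hLs : L * s = 2 / δ * τ' := by
    rw [hL_def, hs_def]; field_simp
  -- the zigzag map
  have hmem : ∀ u : ℝ, infDist u (zigD L) / L ∈ Set.Icc (0:ℝ) 1 := fun u =>
    ⟨div_nonneg Metric.infDist_nonneg hL.le, (div_le_one hL).2 (zig_le hL u)⟩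
  set G : X × ℝ → X × Set.Icc (0:ℝ) 1 :=
    fun p => (p.1, ⟨infDist p.2 (zigD L) / L, hmem p.2⟩) with hG_def
  have hgLip : ∀ a b : ℝ, |infDist a (zigD L) - infDist b (zigD L)| ≤ |a - b| := by
    intro a b
    rw [abs_sub_le_iff]
    constructor
    · have := Metric.infDist_le_infDist_add_dist (x := a) (y := b) (s := zigD L)
      rw [Real.dist_eq] at this; linarith [le_abs_self (a - b)]
    · have := Metric.infDist_le_infDist_add_dist (x := b) (y := a) (s := zigD L)
      rw [Real.dist_eq, abs_sub_comm] at this; linarith [le_abs_self (a - b)]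
  have hGdist : ∀ p q : X × ℝ, dist (G p) (G q) ≤ max (dist p.1 q.1) (|p.2 - q.2| / L) := by
    intro p q
    rw [hG_def]
    rw [Prod.dist_eq]
    apply max_le_max le_rfl
    rw [Subtype.dist_eq, Real.dist_eq]
    rw [div_sub_div_same, abs_div, abs_of_pos hL]
    exact div_le_div_of_nonneg_right (hgLip _ _) hL.le
  have hGc : Continuous G := by
    rw [hG_def]
    exact continuous_fst.prodMk
      (Continuous.subtype_mk (((continuous_infDist_pt _).comp continuous_snd).div_const L) _)
  -- distances inside members of U₀
  have hVdist : ∀ V ∈ U₀, ∀ p ∈ V, ∀ q ∈ V, dist p q ≤ s := by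
    intro V hVU p hp q hq
    have h1 : EMetric.diam V ≤ ENNReal.ofReal s := by
      refine le_trans ?_ hmesh₀
      unfold meshF
      exact le_iSup₂ (f := fun (V : Set (X × Set.Icc (0:ℝ) 1)) (_ : V ∈ U₀) => EMetric.diam V)
        V hVU
    have h2 := (EMetric.edist_le_diam_of_mem hp hq).trans h1
    rwa [edist_dist, ENNReal.ofReal_le_ofReal_iff hs0.le] at h2
  -- second-coordinate "shadow" of a member
  set SV : Set (X × Set.Icc (0:ℝ) 1) → Set ℝ :=
    fun V => {t : ℝ | ∃ x : X, G (x, t) ∈ V} with hSV_def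
  have hSVopen : ∀ V, IsOpen V → IsOpen (SV V) := by
    intro V hV
    have he : SV V = Prod.snd '' (G ⁻¹' V) := by
      ext t; constructor
      · rintro ⟨x, hx⟩; exact ⟨(x, t), hx, rfl⟩
      · rintro ⟨⟨x, t'⟩, hx, rfl⟩; exact ⟨x, hx⟩
    rw [he]
    exact isOpenMap_snd _ (hV.preimage hGc)
  -- diameter of components of SV V
  have hKdiam : ∀ V ∈ U₀, ∀ t₀ : ℝ, ∀ u₁ ∈ connectedComponentIn (SV V) t₀,
      ∀ u₂ ∈ connectedComponentIn (SV V) t₀, |u₁ - u₂| ≤ 2 * L * s := by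
    intro V hVU t₀
    have main : ∀ u₁ ∈ connectedComponentIn (SV V) t₀, ∀ u₂ ∈ connectedComponentIn (SV V) t₀,
        u₁ ≤ u₂ → u₂ - u₁ ≤ 2 * L * s := by
      intro u₁ hu₁ u₂ hu₂ h12
      by_contra hgt
      push_neg at hgt
      have hIcc : Set.Icc u₁ u₂ ⊆ SV V := fun u hu =>
        connectedComponentIn_subset _ _
          ((isPreconnected_connectedComponentIn.ordConnected.out hu₁ hu₂) hu)
      obtain ⟨v₁, hv₁, v₂, hv₂, hosc⟩ := zig_osc hL h12
      have hmin : L * s < min ((u₂ - u₁)/2) L := by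
        apply lt_min
        · nlinarith
        · nlinarith
      have hgap : L * s < |infDist v₁ (zigD L) - infDist v₂ (zigD L)| :=
        lt_of_lt_of_le hmin hosc
      obtain ⟨x₁, hx₁⟩ := hIcc hv₁
      obtain ⟨x₂, hx₂⟩ := hIcc hv₂
      have hd := hVdist V hVU _ hx₁ _ hx₂
      have hsnd : |infDist v₁ (zigD L) - infDist v₂ (zigD L)| / L ≤ s := by
        have h5 : dist (infDist v₁ (zigD L) / L) (infDist v₂ (zigD L) / L)
            ≤ dist (G (x₁, v₁)) (G (x₂, v₂)) := by
          rw [hG_def, Prod.dist_eq, Subtype.dist_eq]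
          exact le_max_right _ _
        rw [Real.dist_eq, div_sub_div_same, abs_div, abs_of_pos hL] at h5
        exact h5.trans hd
      rw [div_le_iff₀ hL] at hsnd
      nlinarith
    intro u₁ hu₁ u₂ hu₂
    rcases le_total u₁ u₂ with h12 | h12
    · have hm := main u₁ hu₁ u₂ hu₂ h12
      rw [abs_sub_comm, abs_of_nonneg (by linarith)]
      linarith
    · have hm := main u₂ hu₂ u₁ hu₁ h12
      rw [abs_of_nonneg (by linarith)]
      linarith
  -- the covering of X × ℝ
  set Fam : Fin (m+1) → Set (Set (X × ℝ)) := fun i =>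
    {W | ∃ V ∈ F₀ i, ∃ t₀ ∈ SV V,
      W = G ⁻¹' V ∩ (Prod.snd ⁻¹' connectedComponentIn (SV V) t₀)} with hFam_def
  have hUmem : ∀ W ∈ ⋃ i, Fam i, ∃ V ∈ U₀, ∃ t₀ ∈ SV V,
      W = G ⁻¹' V ∩ (Prod.snd ⁻¹' connectedComponentIn (SV V) t₀) := by
    intro W hW
    obtain ⟨i, hWi⟩ := Set.mem_iUnion.1 hW
    obtain ⟨V, hVi, t₀, ht₀, rfl⟩ := hWi
    exact ⟨V, hF₀sub i hVi, t₀, ht₀, rfl⟩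
  refine ⟨⋃ i, Fam i, ?_, ?_, ?_, ?_, ?_⟩
  · -- open family
    intro W hW
    obtain ⟨V, hVU, t₀, ht₀, rfl⟩ := hUmem W hW
    exact ((hopen₀ V hVU).preimage hGc).inter
      (((hSVopen V (hopen₀ V hVU)).connectedComponentIn).preimage continuous_snd)
  · -- covering
    rintro ⟨x, t⟩ -
    obtain ⟨V, hVU₀, hGz⟩ := hcov₀ (Set.mem_univ (G (x, t)))
    obtain ⟨i, hVi⟩ : ∃ i, V ∈ F₀ i := by
      rw [hF₀U] at hVU₀; exact Set.mem_iUnion.1 hVU₀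
    have htS : t ∈ SV V := ⟨x, hGz⟩
    exact Set.mem_sUnion.2 ⟨_, Set.mem_iUnion.2 ⟨i, ⟨V, hVi, t, htS, rfl⟩⟩,
      ⟨hGz, mem_connectedComponentIn htS⟩⟩
  · -- colored
    apply isColored_mono (Nat.succ_le_succ hmk)
    refine ⟨Fam, rfl, ?_⟩
    intro i W₁ hW₁ W₂ hW₂ hne
    obtain ⟨V₁, hV₁, t₁, ht₁, rfl⟩ := hW₁
    obtain ⟨V₂, hV₂, t₂, ht₂, rfl⟩ := hW₂
    by_cases hVeq : V₁ = V₂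
    · subst hVeq
      have hKne : connectedComponentIn (SV V₁) t₁ ≠ connectedComponentIn (SV V₁) t₂ := by
        intro hK; exact hne (by rw [hK])
      have hKdisj : Disjoint (connectedComponentIn (SV V₁) t₁)
          (connectedComponentIn (SV V₁) t₂) := by
        rw [Set.disjoint_left]
        intro z hz1 hz2
        exact hKne ((connectedComponentIn_eq hz1).trans (connectedComponentIn_eq hz2).symm)
      exact (hKdisj.preimage Prod.snd).mono Set.inter_subset_right Set.inter_subset_right
    · exact ((hF₀dis i hV₁ hV₂ hVeq).preimage G).mono Set.inter_subset_left
        Set.inter_subset_left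
  · -- mesh
    intro W hW
    obtain ⟨V, hVU, t₀, ht₀, rfl⟩ := hUmem W hW
    obtain ⟨x₀, hx₀⟩ := ht₀
    have ht₀S : t₀ ∈ SV V := ⟨x₀, hx₀⟩
    set K := connectedComponentIn (SV V) t₀ with hK_def
    have ht₀K : t₀ ∈ K := mem_connectedComponentIn ht₀S
    have hKne : K.Nonempty := ⟨t₀, ht₀K⟩
    have hbdd : ∀ u ∈ K, ∀ v ∈ K, |u - v| ≤ 2*L*s := fun u hu v hv =>
      hKdiam V hVU t₀ u hu v hv
    have hbddAbove : BddAbove K := ⟨t₀ + 2*L*s, fun u hu => by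
      have := abs_le.1 (hbdd u hu t₀ ht₀K); linarith [this.2]⟩
    have hbddBelow : BddBelow K := ⟨t₀ - 2*L*s, fun u hu => by
      have := abs_le.1 (hbdd u hu t₀ ht₀K); linarith [this.1]⟩
    set a := sInf K with ha_def
    set b := sSup K with hb_def
    have hba : b ≤ a + 2*L*s := by
      apply csSup_le hKne
      intro u hu
      have h9 : u - 2*L*s ≤ a :=
        le_csInf hKne (fun v hv => by have := abs_le.1 (hbdd u hu v hv); linarith [this.2])
      linarith
    refine ⟨x₀, (a+b)/2, ?_⟩
    rintro ⟨x, t⟩ ⟨hGV, htK⟩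
    refine ⟨?_, ?_⟩
    · have h1 : dist (G (x,t)) (G (x₀, t₀)) ≤ s := hVdist V hVU _ hGV _ hx₀
      have h2 : dist x x₀ ≤ dist (G (x,t)) (G (x₀,t₀)) := by
        rw [hG_def, Prod.dist_eq]; exact le_max_left _ _
      rw [Metric.mem_closedBall, hστ]
      exact h2.trans h1
    · rw [Metric.mem_closedBall, Real.dist_eq]
      have hta : a ≤ t := csInf_le hbddBelow htK
      have htb : t ≤ b := le_csSup hbddAbove htK
      have h2Ls : 2*L*s = 2*(2/δ*τ') := by rw [← hLs]; ring
      rw [abs_le]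
      constructor
      · linarith only [hba, hta, htb, h2Ls]
      · linarith only [hba, hta, htb, h2Ls]
  · -- Lebesgue
    rintro ⟨x, t⟩
    have h1 : ENNReal.ofReal (2*τ) ≤ ⨆ V ∈ U₀, EMetric.infEdist (G (x,t)) Vᶜ := by
      calc ENNReal.ofReal (2*τ) = ENNReal.ofReal (δ*s) := by rw [hδs]
        _ ≤ lebesgueF U₀ Set.univ := hleb₀
        _ ≤ ⨆ V ∈ U₀, EMetric.infEdist (G (x,t)) Vᶜ := by
            unfold lebesgueF
            exact iInf₂_le _ (Set.mem_univ _)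
    have h3 : ENNReal.ofReal τ < ⨆ V ∈ U₀, EMetric.infEdist (G (x,t)) Vᶜ :=
      lt_of_lt_of_le (by rw [ENNReal.ofReal_lt_ofReal_iff (by linarith)]; linarith) h1
    rw [lt_iSup_iff] at h3
    obtain ⟨V, h3⟩ := h3
    rw [lt_iSup_iff] at h3
    obtain ⟨hVU, h4⟩ := h3
    have hball : ∀ x' : X, ∀ t' : ℝ, dist x' x ≤ τ → |t' - t| ≤ τ' → G (x', t') ∈ V := by
      intro x' t' hx' ht'
      by_contra hout
      have h5 : EMetric.infEdist (G (x,t)) Vᶜ ≤ edist (G (x,t)) (G (x',t')) :=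
        EMetric.infEdist_le_edist_of_mem hout
      have h6 : dist (G (x,t)) (G (x',t')) ≤ τ := by
        refine le_trans (hGdist _ _) (max_le ?_ ?_)
        · rw [dist_comm] at hx'; exact hx'
        · rw [← hτL]
          apply div_le_div_of_nonneg_right ?_ hL.le
          rw [abs_sub_comm]; exact ht'
      have h7 : edist (G (x,t)) (G (x',t')) ≤ ENNReal.ofReal τ := by
        rw [edist_dist]; exact ENNReal.ofReal_le_ofReal h6
      exact absurd (h5.trans h7) (not_le.2 h4)
    have hGV : G (x, t) ∈ V := hball x t (by simp [hτ.le]) (by simp [hτ'.le])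
    have htS : t ∈ SV V := ⟨x, hGV⟩
    obtain ⟨i, hVi⟩ : ∃ i, V ∈ F₀ i := by rw [hF₀U] at hVU; exact Set.mem_iUnion.1 hVU
    refine ⟨G ⁻¹' V ∩ (Prod.snd ⁻¹' connectedComponentIn (SV V) t),
      Set.mem_iUnion.2 ⟨i, ⟨V, hVi, t, htS, rfl⟩⟩, ?_⟩
    rintro ⟨x', t'⟩ ⟨hx', ht'⟩
    rw [Metric.mem_closedBall] at hx' ht'
    rw [Real.dist_eq] at ht'
    refine ⟨hball x' t' hx' ht', ?_⟩
    have hIccS : Metric.closedBall t τ' ⊆ SV V := by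
      intro u hu
      rw [Metric.mem_closedBall, Real.dist_eq] at hu
      exact ⟨x, hball x u (by simp [hτ.le]) hu⟩
    have hsub : Metric.closedBall t τ' ⊆ connectedComponentIn (SV V) t := by
      apply IsPreconnected.subset_connectedComponentIn ?_
        (Metric.mem_closedBall_self hτ'.le) hIccS
      rw [Real.closedBall_eq_Icc]; exact isPreconnected_Icc
    exact hsub (by rw [Metric.mem_closedBall, Real.dist_eq]; exact ht')
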